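/- arXiv:1911.00272 — 2 statements merged into one kernel-verified Lean document; each statement's English description precedes it below -/
import Mathlib

section
/- For every square sub-row-stochastic matrix A (all entries in [0,1], each row sums to at most 1), |det(A)| ≤ 1, with equality if and only if A is a permutation matrix. -/
/-- A matrix is a permutation matrix if there is a permutation `π` with
`A c (π c) = 1` for all `c` and all other entries `0`. -/
def IsPermMatrix {C : ℕ} (A : Matrix (Fin C) (Fin C) ℝ) : Prop :=
  ∃ π : Equiv.Perm (Fin C), ∀ i j, A i j = if π i = j then 1 else 0

/-- For every square sub-row-stochastic matrix `A` (entries in `[0,1]`,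
each row sums to at most 1), `|det A| ≤ 1`, with equality iff `A` is a permutation matrix. -/
theorem abs_det_le_one_of_sub_row_stochastic {C : ℕ} (A : Matrix (Fin C) (Fin C) ℝ)
    (hrange : ∀ i j, 0 ≤ A i j ∧ A i j ≤ 1)
    (hrow : ∀ i, ∑ j, A i j ≤ 1) :
    |A.det| ≤ 1 ∧ (|A.det| = 1 ↔ IsPermMatrix A) := by
  classical
  have h0 : ∀ i j, 0 ≤ A i j := fun i j => (hrange i j).1
  -- the "permanent"
  set P : ℝ := ∑ σ : Equiv.Perm (Fin C), ∏ i, A i (σ i) with hPdef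
  have hdet : A.det = ∑ σ : Equiv.Perm (Fin C), (Equiv.Perm.sign σ : ℝ) * ∏ i, A i (σ i) := by
    rw [← Matrix.det_transpose, Matrix.det_apply']
    simp [Matrix.transpose_apply]
  have habs : |A.det| ≤ P := by
    rw [hdet]
    refine (Finset.abs_sum_le_sum_abs _ _).trans_eq ?_
    refine Finset.sum_congr rfl fun σ _ => ?_
    have hp : (0:ℝ) ≤ ∏ i, A i (σ i) := Finset.prod_nonneg fun i _ => h0 i (σ i)
    rcases Int.units_eq_one_or (Equiv.Perm.sign σ) with h | h <;>
      simp [h, abs_of_nonneg hp]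
  -- embedding of permutations into all functions
  set emb : Equiv.Perm (Fin C) ↪ (Fin C → Fin C) :=
    ⟨fun σ => ⇑σ, Equiv.coe_fn_injective⟩ with hemb
  set s : Finset (Fin C → Fin C) := Finset.univ.map emb with hs
  have hPs : P = ∑ f ∈ s, ∏ i, A i (f i) := by
    rw [hs, Finset.sum_map]
    rfl
  have hsum : ∏ i, ∑ j, A i j = ∑ f : Fin C → Fin C, ∏ i, A i (f i) := by
    rw [Finset.prod_univ_sum (f := fun i j => A i j)]
    rw [Fintype.piFinset_univ]
  have hPle : P ≤ ∑ f : Fin C → Fin C, ∏ i, A i (f i) := by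
    rw [hPs]
    exact Finset.sum_le_sum_of_subset_of_nonneg (Finset.subset_univ s)
      (fun f _ _ => Finset.prod_nonneg fun i _ => h0 i (f i))
  have hrows_nonneg : ∀ i, (0:ℝ) ≤ ∑ j, A i j :=
    fun i => Finset.sum_nonneg fun j _ => h0 i j
  have hprodle : ∏ i, ∑ j, A i j ≤ 1 :=
    Finset.prod_le_one (fun i _ => hrows_nonneg i) (fun i _ => hrow i)
  have hP1 : P ≤ 1 := hPle.trans (hsum ▸ hprodle)
  have hmain : |A.det| ≤ 1 := habs.trans hP1
  refine ⟨hmain, ?_, ?_⟩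
  · -- |det| = 1 → permutation matrix
    intro h1
    have hPeq : P = 1 := le_antisymm hP1 (h1 ▸ habs)
    have hprod1 : ∏ i, ∑ j, A i j = 1 := by
      refine le_antisymm hprodle ?_
      calc (1:ℝ) = P := hPeq.symm
        _ ≤ _ := hPle.trans_eq hsum.symm
    -- each row sums to 1
    have hr1 : ∀ i, ∑ j, A i j = 1 := by
      intro i
      by_contra h
      have hlt : ∑ j, A i j < 1 := lt_of_le_of_ne (hrow i) h
      have hrest : ∏ x ∈ Finset.univ.erase i, ∑ j, A x j ≤ 1 :=
        Finset.prod_le_one (fun x _ => hrows_nonneg x) (fun x _ => hrow x)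
      have hrest0 : (0:ℝ) ≤ ∏ x ∈ Finset.univ.erase i, ∑ j, A x j :=
        Finset.prod_nonneg fun x _ => hrows_nonneg x
      have : ∏ x, ∑ j, A x j < 1 := by
        rw [← Finset.mul_prod_erase Finset.univ _ (Finset.mem_univ i)]
        calc (∑ j, A i j) * ∏ x ∈ Finset.univ.erase i, ∑ j, A x j
            ≤ (∑ j, A i j) * 1 := by
              exact mul_le_mul_of_nonneg_left hrest (hrows_nonneg i)
          _ < 1 := by rw [mul_one]; exact hlt
      linarith [hprod1]
    -- the non-permutation part of the sum vanishes
    have hsdiff : ∑ f ∈ Finset.univ \ s, ∏ i, A i (f i) = 0 := by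
      have hsplit := Finset.sum_sdiff (f := fun f : Fin C → Fin C => ∏ i, A i (f i))
        (Finset.subset_univ s)
      have h2 : (∑ f : Fin C → Fin C, ∏ i, A i (f i)) = 1 := by rw [← hsum, hprod1]
      rw [h2, ← hPs, hPeq] at hsplit
      linarith
    have hterm0 : ∀ f ∈ Finset.univ \ s, ∏ i, A i (f i) = 0 :=
      (Finset.sum_eq_zero_iff_of_nonneg
        (fun f _ => Finset.prod_nonneg fun i _ => h0 i (f i))).mp hsdiff
    -- some permutation has positive product
    have hex : ∃ σ : Equiv.Perm (Fin C), 0 < ∏ i, A i (σ i) := by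
      by_contra h
      push_neg at h
      have : P = 0 := Finset.sum_eq_zero fun σ _ =>
        le_antisymm (h σ) (Finset.prod_nonneg fun i _ => h0 i (σ i))
      rw [hPeq] at this
      norm_num at this
    obtain ⟨σ, hσ⟩ := hex
    have hfac : ∀ k, 0 < A k (σ k) := by
      intro k
      rcases lt_or_eq_of_le (h0 k (σ k)) with h | h
      · exact h
      · exfalso
        have : ∏ i, A i (σ i) = 0 :=
          Finset.prod_eq_zero (Finset.mem_univ k) h.symm
        rw [this] at hσ; exact lt_irrefl 0 hσ
    -- off-diagonal (relative to σ) entries vanish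
    have hzero : ∀ i j, σ i ≠ j → A i j = 0 := by
      intro i j hne
      by_contra hA
      have hApos : 0 < A i j := lt_of_le_of_ne (h0 i j) (Ne.symm hA)
      set f : Fin C → Fin C := fun k => if k = i then j else σ k with hf
      have hfpos : 0 < ∏ k, A k (f k) := by
        refine Finset.prod_pos fun k _ => ?_
        by_cases hk : k = i
        · subst hk; simp only [hf, if_pos rfl]; exact hApos
        · simp only [hf, if_neg hk]; exact hfac k
      have hfni : ¬ Function.Injective f := by
        intro hinj
        have hsurj : Function.Surjective f := Finite.surjective_of_injective hinj
        obtain ⟨k, hk⟩ := hsurj (σ i)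
        by_cases hki : k = i
        · subst hki
          simp only [hf, if_pos rfl] at hk
          exact hne hk.symm
        · simp only [hf, if_neg hki] at hk
          exact hki (σ.injective hk)
      have hfmem : f ∈ Finset.univ \ s := by
        refine Finset.mem_sdiff.mpr ⟨Finset.mem_univ f, ?_⟩
        intro hfs
        obtain ⟨τ, _, hτ⟩ := Finset.mem_map.mp hfs
        exact hfni (hτ ▸ τ.injective)
      have := hterm0 f hfmem
      rw [this] at hfpos
      exact lt_irrefl 0 hfpos
    refine ⟨σ, fun i j => ?_⟩
    by_cases hij : σ i = j
    · rw [if_pos hij]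
      have hsingle : ∑ j, A i j = A i (σ i) :=
        Finset.sum_eq_single (σ i) (fun b _ hb => hzero i b (Ne.symm hb))
          (fun h => absurd (Finset.mem_univ (σ i)) h)
      rw [← hij, ← hsingle, hr1 i]
    · rw [if_neg hij]
      exact hzero i j hij
  · -- permutation matrix → |det| = 1
    rintro ⟨π, hπ⟩
    have hAeq : A = π.permMatrix ℝ := by
      ext i j
      rw [hπ i j]
      simp [Equiv.Perm.permMatrix, PEquiv.toMatrix_apply, Equiv.toPEquiv_apply,
        Option.mem_def, eq_comm]
    rw [hAeq, Matrix.det_permutation]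
    rcases Int.units_eq_one_or (Equiv.Perm.sign π) with h | h <;> simp [h]
end

section
/- Quality ordering of expected payments: assume reports X̂_1,...,X̂_n (n ≥ 3) are conditionally independent given a ground-truth variable G (all valued in {1,...,C}), and Quality(X̂_i) := DMI(X̂_i; G)^2. Then for any two agents i, j, E[p_i] − E[p_j] = (Quality(X̂_i) − Quality(X̂_j)) · (Σ_{k≠i,j} a_1 a_2 det(U_{X̂_k|G})^2), where p_i = Σ_{k≠i} det(M_1^{ik})det(M_2^{ik}) is agent i's DMI-Mechanism payment and a_ℓ = binom(|T_ℓ|,C)·C!. -/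
open MeasureTheory Finset

/-- The per-task outcome: all agents' reports together with the ground truth. -/
abbrev Outcome (n C : ℕ) := (Fin n → Fin C) × Fin C

/-- The count matrix of agents `i` and `k` over the tasks in `Tl`. -/
def countMatrix {C T n : ℕ} (Tl : Finset (Fin T)) (i k : Fin n)
    (ω : Fin T → Outcome n C) : Matrix (Fin C) (Fin C) ℝ :=
  Matrix.of fun c c' => ∑ t ∈ Tl, if (ω t).1 i = c ∧ (ω t).1 k = c' then (1 : ℝ) else 0

/-- Agent `i`'s DMI-Mechanism payment: `p_i = Σ_{k≠i} det(M₁^{ik})·det(M₂^{ik})`. -/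
def payment {C T n : ℕ} (T1 T2 : Finset (Fin T)) (i : Fin n)
    (ω : Fin T → Outcome n C) : ℝ :=
  ∑ k ∈ Finset.univ.erase i,
    (countMatrix T1 i k ω).det * (countMatrix T2 i k ω).det

/-- The joint distribution matrix of agent `i`'s report and the ground truth `G`. -/
noncomputable def jointWithG {n C : ℕ} (ν : Measure (Outcome n C)) (i : Fin n) :
    Matrix (Fin C) (Fin C) ℝ :=
  Matrix.of fun c g => (ν {p | p.1 i = c ∧ p.2 = g}).toReal

/-- Agent `i`'s quality score: `Quality(X̂ᵢ) = DMI(X̂ᵢ; G)²`. -/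
noncomputable def quality {n C : ℕ} (ν : Measure (Outcome n C)) (i : Fin n) : ℝ :=
  |(jointWithG ν i).det| ^ 2

/-- The transition matrix `U_{X̂ₖ|G}`: entry `(g, c)` is `P[X̂ₖ = c | G = g]`. -/
noncomputable def transFromG {n C : ℕ} (ν : Measure (Outcome n C)) (k : Fin n) :
    Matrix (Fin C) (Fin C) ℝ :=
  Matrix.of fun g c => (ν {p | p.1 k = c ∧ p.2 = g}).toReal / (ν {p | p.2 = g}).toReal

open Classical in
noncomputable def indi (P : Prop) : ℝ := if P then 1 else 0

lemma indi_true {P : Prop} (h : P) : indi P = 1 := by simp [indi, h]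
lemma indi_false {P : Prop} (h : ¬P) : indi P = 0 := by simp [indi, h]
lemma indi_eq_ite (P : Prop) [Decidable P] : indi P = if P then 1 else 0 := by
  by_cases h : P <;> simp [indi, h]
lemma indi_congr {P Q : Prop} (h : P ↔ Q) : indi P = indi Q := by
  by_cases hP : P
  · rw [indi_true hP, indi_true (h.mp hP)]
  · rw [indi_false hP, indi_false (fun hq => hP (h.mpr hq))]
lemma indi_and (P Q : Prop) : indi (P ∧ Q) = indi P * indi Q := by
  by_cases hP : P <;> by_cases hQ : Q <;>
    simp [indi_true, indi_false, hP, hQ, indi_true (And.intro hP hQ)] <;>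
    rw [indi_false (by tauto)] <;> ring
lemma prod_indi {α : Type*} (s : Finset α) (P : α → Prop) :
    (∏ a ∈ s, indi (P a)) = indi (∀ a ∈ s, P a) := by
  by_cases h : ∀ a ∈ s, P a
  · rw [indi_true h]; exact Finset.prod_eq_one fun a ha => indi_true (h a ha)
  · rw [indi_false h]; push_neg at h; obtain ⟨a, ha, hPa⟩ := h
    exact Finset.prod_eq_zero ha (indi_false hPa)

lemma countMatrix_det {C T n : ℕ} (Tl : Finset (Fin T)) (i k : Fin n)
    (ω : Fin T → Outcome n C) :
    (countMatrix Tl i k ω).det =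
      ∑ σ : Equiv.Perm (Fin C), ((Equiv.Perm.sign σ : ℤ) : ℝ) *
        ∑ f ∈ Fintype.piFinset (fun _ : Fin C => Tl),
          ∏ c, indi ((ω (f c)).1 i = σ c ∧ (ω (f c)).1 k = c) := by
  rw [Matrix.det_apply]
  refine Finset.sum_congr rfl fun σ _ => ?_
  rw [← Finset.prod_univ_sum (fun _ => Tl)
    (fun c t => indi ((ω t).1 i = σ c ∧ (ω t).1 k = c))]
  rw [Units.smul_def, zsmul_eq_mul]
  congr 1
  refine Finset.prod_congr rfl fun c _ => ?_
  simp only [countMatrix, Matrix.of_apply]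
  refine Finset.sum_congr rfl fun t _ => ?_
  rw [indi_eq_ite]

lemma prod_merge {C T n : ℕ} (i k : Fin n) (σ1 σ2 : Equiv.Perm (Fin C))
    (f1 f2 : Fin C → Fin T) (ω : Fin T → Outcome n C) :
    (∏ c, indi ((ω (f1 c)).1 i = σ1 c ∧ (ω (f1 c)).1 k = c)) *
    (∏ c, indi ((ω (f2 c)).1 i = σ2 c ∧ (ω (f2 c)).1 k = c)) =
    ∏ t, indi ((∀ c, f1 c = t → ((ω t).1 i = σ1 c ∧ (ω t).1 k = c)) ∧
               (∀ c, f2 c = t → ((ω t).1 i = σ2 c ∧ (ω t).1 k = c))) := by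
  have key : ∀ (f : Fin C → Fin T) (σ : Equiv.Perm (Fin C)),
      (∏ c, indi ((ω (f c)).1 i = σ c ∧ (ω (f c)).1 k = c)) =
      ∏ t, ∏ c, indi (f c = t → ((ω t).1 i = σ c ∧ (ω t).1 k = c)) := by
    intro f σ
    rw [Finset.prod_comm]
    refine Finset.prod_congr rfl fun c _ => ?_
    have single : ∏ t, indi (f c = t → ((ω t).1 i = σ c ∧ (ω t).1 k = c)) =
        indi (f c = f c → ((ω (f c)).1 i = σ c ∧ (ω (f c)).1 k = c)) :=
      Finset.prod_eq_single (f c) (fun t _ ht => indi_true (fun h => absurd h.symm ht))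
        (fun h => absurd (Finset.mem_univ _) h)
    rw [single]
    exact indi_congr (by tauto)
  calc (∏ c, indi ((ω (f1 c)).1 i = σ1 c ∧ (ω (f1 c)).1 k = c)) *
      (∏ c, indi ((ω (f2 c)).1 i = σ2 c ∧ (ω (f2 c)).1 k = c))
      = (∏ t, ∏ c, indi (f1 c = t → ((ω t).1 i = σ1 c ∧ (ω t).1 k = c))) *
        (∏ t, ∏ c, indi (f2 c = t → ((ω t).1 i = σ2 c ∧ (ω t).1 k = c))) := by
        rw [key f1 σ1, key f2 σ2]
    _ = ∏ t, ((∏ c, indi (f1 c = t → ((ω t).1 i = σ1 c ∧ (ω t).1 k = c))) *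
              (∏ c, indi (f2 c = t → ((ω t).1 i = σ2 c ∧ (ω t).1 k = c)))) := by
        rw [← Finset.prod_mul_distrib]
    _ = _ := by
        refine Finset.prod_congr rfl fun t _ => ?_
        rw [prod_indi, prod_indi, indi_and]
        congr 1 <;> exact indi_congr (by simp)

lemma integral_prod_indi {C T n : ℕ} (ν : Measure (Outcome n C)) [IsProbabilityMeasure ν]
    (Q : Fin T → Outcome n C → Prop) :
    ∫ ω, (∏ t, indi (Q t (ω t))) ∂(Measure.pi fun _ : Fin T => ν)
      = ∏ t, (ν {x | Q t x}).toReal := by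
  have hmeas : ∀ t, MeasurableSet {x : Outcome n C | Q t x} :=
    fun t => (Set.toFinite _).measurableSet
  have heq : ∀ ω : Fin T → Outcome n C, (∏ t, indi (Q t (ω t)))
      = Set.indicator (Set.univ.pi fun t => {x | Q t x}) (fun _ => (1:ℝ)) ω := by
    intro ω
    rw [prod_indi]
    by_cases h : ∀ t ∈ univ, Q t (ω t)
    · rw [indi_true h, Set.indicator_of_mem (by simpa using fun t => h t (mem_univ t))]
    · rw [indi_false h, Set.indicator_of_notMem]
      intro hmem
      exact h fun t _ => hmem t (Set.mem_univ t)
  simp_rw [heq]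
  rw [integral_indicator_const (1:ℝ) (MeasurableSet.univ_pi hmeas), measureReal_def, Measure.pi_pi,
    smul_eq_mul, mul_one, ENNReal.toReal_prod]

/-- evaluation of the product of measures for given `σ1 σ2 f1 f2` -/
lemma eval_term {C T n : ℕ} (ν : Measure (Outcome n C)) [IsProbabilityMeasure ν]
    (T1 T2 : Finset (Fin T)) (hdisj : Disjoint T1 T2) (i k : Fin n)
    (σ1 σ2 : Equiv.Perm (Fin C)) (f1 f2 : Fin C → Fin T)
    (hf1 : ∀ c, f1 c ∈ T1) (hf2 : ∀ c, f2 c ∈ T2) :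
    (∏ t, (ν {x : Outcome n C |
        (∀ c, f1 c = t → (x.1 i = σ1 c ∧ x.1 k = c)) ∧
        (∀ c, f2 c = t → (x.1 i = σ2 c ∧ x.1 k = c))}).toReal)
      = (if Function.Injective f1 then 1 else 0) * (if Function.Injective f2 then 1 else 0) *
        ((∏ c, (ν {x : Outcome n C | x.1 i = σ1 c ∧ x.1 k = c}).toReal) *
         (∏ c, (ν {x : Outcome n C | x.1 i = σ2 c ∧ x.1 k = c}).toReal)) := by
  set Q : Fin T → Set (Outcome n C) := fun t => {x |
        (∀ c, f1 c = t → (x.1 i = σ1 c ∧ x.1 k = c)) ∧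
        (∀ c, f2 c = t → (x.1 i = σ2 c ∧ x.1 k = c))} with hQ
  by_cases hi1 : Function.Injective f1
  · by_cases hi2 : Function.Injective f2
    · rw [if_pos hi1, if_pos hi2, one_mul, one_mul]
      have hdisj' : Disjoint (Finset.image f1 univ) (Finset.image f2 univ) := by
        refine Finset.disjoint_left.2 fun t ht1 ht2 => ?_
        obtain ⟨c1, _, rfl⟩ := Finset.mem_image.1 ht1
        obtain ⟨c2, _, hc2⟩ := Finset.mem_image.1 ht2
        exact (Finset.disjoint_left.1 hdisj) (hf1 c1) (hc2 ▸ hf2 c2)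
      have houter : ∀ t ∈ univ, t ∉ (Finset.image f1 univ ∪ Finset.image f2 univ) →
          (ν (Q t)).toReal = 1 := by
        intro t _ ht
        have h1 : Q t = Set.univ := by
          ext x
          simp only [hQ, Set.mem_setOf_eq, Set.mem_univ, iff_true]
          constructor
          · intro c hc; exact absurd (Finset.mem_union_left _ (Finset.mem_image.2 ⟨c, mem_univ c, hc⟩)) ht
          · intro c hc; exact absurd (Finset.mem_union_right _ (Finset.mem_image.2 ⟨c, mem_univ c, hc⟩)) ht
        rw [h1, measure_univ, ENNReal.toReal_one]
      rw [← Finset.prod_subset (Finset.subset_univ (Finset.image f1 univ ∪ Finset.image f2 univ)) houter,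
        Finset.prod_union hdisj', Finset.prod_image (fun a _ b _ h => hi1 h),
        Finset.prod_image (fun a _ b _ h => hi2 h)]
      congr 1
      · refine Finset.prod_congr rfl fun c _ => ?_
        have hset : Q (f1 c) = {x : Outcome n C | x.1 i = σ1 c ∧ x.1 k = c} := by
          ext x
          simp only [hQ, Set.mem_setOf_eq]
          constructor
          · intro ⟨h1, _⟩; exact h1 c rfl
          · intro hx
            refine ⟨fun c' hc' => ?_, fun c' hc' => ?_⟩
            · rwa [hi1 hc']
            · exact absurd ((Finset.disjoint_left.1 hdisj) (hf1 c)) (by rw [← hc']; simp [hf2 c'])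
        rw [hset]
      · refine Finset.prod_congr rfl fun c _ => ?_
        have hset : Q (f2 c) = {x : Outcome n C | x.1 i = σ2 c ∧ x.1 k = c} := by
          ext x
          simp only [hQ, Set.mem_setOf_eq]
          constructor
          · intro ⟨_, h2⟩; exact h2 c rfl
          · intro hx
            refine ⟨fun c' hc' => ?_, fun c' hc' => ?_⟩
            · exact absurd ((Finset.disjoint_left.1 hdisj) (hf1 c')) (by rw [hc']; simp [hf2 c])
            · rwa [hi2 hc']
        rw [hset]
    · obtain ⟨c, c', hcc', hne⟩ : ∃ c c', f2 c = f2 c' ∧ c ≠ c' := by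
        simp only [Function.Injective, not_forall] at hi2
        obtain ⟨a, b, hab, hne⟩ := hi2; exact ⟨a, b, hab, hne⟩
      rw [if_neg hi2, mul_zero, zero_mul]
      refine Finset.prod_eq_zero (mem_univ (f2 c)) ?_
      have hempty : Q (f2 c) = ∅ := by
        ext x
        simp only [hQ, Set.mem_setOf_eq, Set.mem_empty_iff_false, iff_false]
        rintro ⟨-, h2⟩
        have e1 := (h2 c rfl).2
        have e2 := (h2 c' hcc'.symm).2
        exact hne (e1 ▸ e2 ▸ rfl)
      show (ν (Q (f2 c))).toReal = 0
      rw [hempty, measure_empty, ENNReal.toReal_zero]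
  · obtain ⟨c, c', hcc', hne⟩ : ∃ c c', f1 c = f1 c' ∧ c ≠ c' := by
      simp only [Function.Injective, not_forall] at hi1
      obtain ⟨a, b, hab, hne⟩ := hi1; exact ⟨a, b, hab, hne⟩
    rw [if_neg hi1, zero_mul, zero_mul]
    refine Finset.prod_eq_zero (mem_univ (f1 c)) ?_
    have hempty : Q (f1 c) = ∅ := by
      ext x
      simp only [hQ, Set.mem_setOf_eq, Set.mem_empty_iff_false, iff_false]
      rintro ⟨h1, -⟩
      have e1 := (h1 c rfl).2
      have e2 := (h1 c' hcc'.symm).2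
      exact hne (e1 ▸ e2 ▸ rfl)
    show (ν (Q (f1 c))).toReal = 0
    rw [hempty, measure_empty, ENNReal.toReal_zero]

/-- number of injections from `Fin C` into a finset -/
lemma card_inj {T : ℕ} (C : ℕ) (s : Finset (Fin T)) :
    ((Fintype.piFinset (fun _ : Fin C => s)).filter Function.Injective).card
      = s.card.descFactorial C := by
  classical
  have e : {f : Fin C → Fin T // f ∈ (Fintype.piFinset (fun _ : Fin C => s)).filter Function.Injective}
      ≃ (Fin C ↪ ↥s) := by
    refine ⟨fun f => ⟨fun c => ⟨f.1 c, by
        have := f.2; rw [Finset.mem_filter, Fintype.mem_piFinset] at this; exact this.1 c⟩, ?_⟩,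
      fun g => ⟨fun c => (g c : Fin T), ?_⟩, ?_, ?_⟩
    · intro a b hab
      have := f.2; rw [Finset.mem_filter] at this
      exact this.2 (congrArg Subtype.val hab)
    · rw [Finset.mem_filter, Fintype.mem_piFinset]
      exact ⟨fun c => (g c).2, fun a b hab => g.injective (Subtype.ext hab)⟩
    · intro f; rfl
    · intro g; ext c; rfl
  rw [← Fintype.card_coe, Fintype.card_congr e, Fintype.card_embedding_eq,
    Fintype.card_coe, Fintype.card_fin]

/-- The joint matrix of agents i and k. -/
noncomputable def jointIK {n C : ℕ} (ν : Measure (Outcome n C)) (i k : Fin n) :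
    Matrix (Fin C) (Fin C) ℝ :=
  Matrix.of fun c c' => (ν {x : Outcome n C | x.1 i = c ∧ x.1 k = c'}).toReal

lemma expected_det_prod {C T n : ℕ} (ν : Measure (Outcome n C)) [IsProbabilityMeasure ν]
    (T1 T2 : Finset (Fin T)) (hdisj : Disjoint T1 T2) (i k : Fin n) :
    ∫ ω, (countMatrix T1 i k ω).det * (countMatrix T2 i k ω).det
        ∂(Measure.pi fun _ : Fin T => ν)
      = (T1.card.descFactorial C : ℝ) * (T2.card.descFactorial C : ℝ) *
        (jointIK ν i k).det ^ 2 := by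
  classical
  set μ := (Measure.pi fun _ : Fin T => ν) with hμ
  set P1 := Fintype.piFinset (fun _ : Fin C => T1) with hP1
  set P2 := Fintype.piFinset (fun _ : Fin C => T2) with hP2
  have hpt : ∀ ω : Fin T → Outcome n C,
      (countMatrix T1 i k ω).det * (countMatrix T2 i k ω).det =
      ∑ σ1 : Equiv.Perm (Fin C), ∑ σ2 : Equiv.Perm (Fin C), ∑ f1 ∈ P1, ∑ f2 ∈ P2,
        (((Equiv.Perm.sign σ1 : ℤ) : ℝ) * ((Equiv.Perm.sign σ2 : ℤ) : ℝ)) *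
          ∏ t, indi ((∀ c, f1 c = t → ((ω t).1 i = σ1 c ∧ (ω t).1 k = c)) ∧
                     (∀ c, f2 c = t → ((ω t).1 i = σ2 c ∧ (ω t).1 k = c))) := by
    intro ω
    rw [countMatrix_det, countMatrix_det, Finset.sum_mul_sum]
    refine Finset.sum_congr rfl fun σ1 _ => Finset.sum_congr rfl fun σ2 _ => ?_
    rw [mul_mul_mul_comm, Finset.sum_mul_sum, Finset.mul_sum]
    refine Finset.sum_congr rfl fun f1 _ => ?_
    rw [Finset.mul_sum]
    refine Finset.sum_congr rfl fun f2 _ => ?_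
    rw [prod_merge]
  simp_rw [hpt]
  rw [integral_finset_sum _ (fun _ _ => Integrable.of_finite)]
  have step : ∀ σ1 : Equiv.Perm (Fin C),
      (∫ ω, ∑ σ2 : Equiv.Perm (Fin C), ∑ f1 ∈ P1, ∑ f2 ∈ P2,
        (((Equiv.Perm.sign σ1 : ℤ) : ℝ) * ((Equiv.Perm.sign σ2 : ℤ) : ℝ)) *
          ∏ t, indi ((∀ c, f1 c = t → ((ω t).1 i = σ1 c ∧ (ω t).1 k = c)) ∧
                     (∀ c, f2 c = t → ((ω t).1 i = σ2 c ∧ (ω t).1 k = c))) ∂μ)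
      = ∑ σ2 : Equiv.Perm (Fin C),
          (((Equiv.Perm.sign σ1 : ℤ) : ℝ) * ((Equiv.Perm.sign σ2 : ℤ) : ℝ)) *
          ((T1.card.descFactorial C : ℝ) * (T2.card.descFactorial C : ℝ)) *
          ((∏ c, (ν {x : Outcome n C | x.1 i = σ1 c ∧ x.1 k = c}).toReal) *
           (∏ c, (ν {x : Outcome n C | x.1 i = σ2 c ∧ x.1 k = c}).toReal)) := by
    intro σ1
    rw [integral_finset_sum _ (fun _ _ => Integrable.of_finite)]
    refine Finset.sum_congr rfl fun σ2 _ => ?_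
    rw [integral_finset_sum _ (fun _ _ => Integrable.of_finite)]
    have inner : ∀ f1 ∈ P1,
        (∫ ω, ∑ f2 ∈ P2,
          (((Equiv.Perm.sign σ1 : ℤ) : ℝ) * ((Equiv.Perm.sign σ2 : ℤ) : ℝ)) *
            ∏ t, indi ((∀ c, f1 c = t → ((ω t).1 i = σ1 c ∧ (ω t).1 k = c)) ∧
                       (∀ c, f2 c = t → ((ω t).1 i = σ2 c ∧ (ω t).1 k = c))) ∂μ)
        = ∑ f2 ∈ P2,
          (((Equiv.Perm.sign σ1 : ℤ) : ℝ) * ((Equiv.Perm.sign σ2 : ℤ) : ℝ)) *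
          ((if Function.Injective f1 then 1 else 0) * (if Function.Injective f2 then 1 else 0) *
            ((∏ c, (ν {x : Outcome n C | x.1 i = σ1 c ∧ x.1 k = c}).toReal) *
             (∏ c, (ν {x : Outcome n C | x.1 i = σ2 c ∧ x.1 k = c}).toReal))) := by
      intro f1 hf1
      rw [integral_finset_sum _ (fun _ _ => Integrable.of_finite)]
      refine Finset.sum_congr rfl fun f2 hf2 => ?_
      rw [MeasureTheory.integral_const_mul, integral_prod_indi ν
        (fun t x => (∀ c, f1 c = t → (x.1 i = σ1 c ∧ x.1 k = c)) ∧
                    (∀ c, f2 c = t → (x.1 i = σ2 c ∧ x.1 k = c)))]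
      rw [eval_term ν T1 T2 hdisj i k σ1 σ2 f1 f2
        (fun c => (Fintype.mem_piFinset.1 hf1) c) (fun c => (Fintype.mem_piFinset.1 hf2) c)]
    rw [Finset.sum_congr rfl inner]
    -- now a double sum; collapse the f1,f2 sums
    have collapse :
        (∑ f1 ∈ P1, ∑ f2 ∈ P2,
          (((Equiv.Perm.sign σ1 : ℤ) : ℝ) * ((Equiv.Perm.sign σ2 : ℤ) : ℝ)) *
          ((if Function.Injective f1 then 1 else 0) * (if Function.Injective f2 then 1 else 0) *
            ((∏ c, (ν {x : Outcome n C | x.1 i = σ1 c ∧ x.1 k = c}).toReal) *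
             (∏ c, (ν {x : Outcome n C | x.1 i = σ2 c ∧ x.1 k = c}).toReal))))
        = (∑ f1 ∈ P1, if Function.Injective f1 then (1:ℝ) else 0) *
          (∑ f2 ∈ P2, if Function.Injective f2 then (1:ℝ) else 0) *
          ((((Equiv.Perm.sign σ1 : ℤ) : ℝ) * ((Equiv.Perm.sign σ2 : ℤ) : ℝ)) *
            ((∏ c, (ν {x : Outcome n C | x.1 i = σ1 c ∧ x.1 k = c}).toReal) *
             (∏ c, (ν {x : Outcome n C | x.1 i = σ2 c ∧ x.1 k = c}).toReal))) := by
      conv_rhs => rw [Finset.sum_mul_sum, Finset.sum_mul]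
      refine Finset.sum_congr rfl fun f1 _ => ?_
      conv_rhs => rw [Finset.sum_mul]
      refine Finset.sum_congr rfl fun f2 _ => ?_
      ring
    rw [collapse, sum_boole, sum_boole, card_inj, card_inj]
    push_cast
    ring
  rw [Finset.sum_congr rfl (fun σ1 _ => step σ1)]
  -- final: collapse the permutation sums into det² 
  have det1 : (jointIK ν i k).det
      = ∑ σ : Equiv.Perm (Fin C), ((Equiv.Perm.sign σ : ℤ) : ℝ) *
          ∏ c, (ν {x : Outcome n C | x.1 i = σ c ∧ x.1 k = c}).toReal := by
    rw [Matrix.det_apply]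
    refine Finset.sum_congr rfl fun σ _ => ?_
    rw [Units.smul_def, zsmul_eq_mul]
    rfl
  have final :
      (∑ σ1 : Equiv.Perm (Fin C), ∑ σ2 : Equiv.Perm (Fin C),
        (((Equiv.Perm.sign σ1 : ℤ) : ℝ) * ((Equiv.Perm.sign σ2 : ℤ) : ℝ)) *
        ((T1.card.descFactorial C : ℝ) * (T2.card.descFactorial C : ℝ)) *
        ((∏ c, (ν {x : Outcome n C | x.1 i = σ1 c ∧ x.1 k = c}).toReal) *
         (∏ c, (ν {x : Outcome n C | x.1 i = σ2 c ∧ x.1 k = c}).toReal)))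
      = ((T1.card.descFactorial C : ℝ) * (T2.card.descFactorial C : ℝ)) *
        ((∑ σ : Equiv.Perm (Fin C), ((Equiv.Perm.sign σ : ℤ) : ℝ) *
          ∏ c, (ν {x : Outcome n C | x.1 i = σ c ∧ x.1 k = c}).toReal) *
         (∑ σ : Equiv.Perm (Fin C), ((Equiv.Perm.sign σ : ℤ) : ℝ) *
          ∏ c, (ν {x : Outcome n C | x.1 i = σ c ∧ x.1 k = c}).toReal)) := by
    conv_rhs => rw [Finset.sum_mul_sum, Finset.mul_sum]
    refine Finset.sum_congr rfl fun σ1 _ => ?_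
    conv_rhs => rw [Finset.mul_sum]
    refine Finset.sum_congr rfl fun σ2 _ => ?_
    ring
  rw [final, ← det1, sq]

lemma sum_over_G {n C : ℕ} (ν : Measure (Outcome n C)) (A : Outcome n C → Prop) :
    ν {x | A x} = ∑ g : Fin C, ν {x | A x ∧ x.2 = g} := by
  have : {x : Outcome n C | A x} = ⋃ g ∈ (univ : Finset (Fin C)), {x | A x ∧ x.2 = g} := by
    ext x; simp [Set.mem_iUnion]
  rw [this, measure_biUnion_finset]
  · intro g _ g' _ hgg'
    simp only [Function.onFun, Set.disjoint_left]
    rintro x ⟨-, h1⟩ ⟨-, h2⟩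
    exact hgg' (h1 ▸ h2 ▸ rfl)
  · exact fun g _ => (Set.toFinite _).measurableSet

lemma sum_over_coord {n C : ℕ} (ν : Measure (Outcome n C)) (m : Fin n) (g : Fin C) :
    (∑ v : Fin C, ν {p : Outcome n C | p.1 m = v ∧ p.2 = g}) = ν {p : Outcome n C | p.2 = g} := by
  have : {p : Outcome n C | p.2 = g} = ⋃ v ∈ (univ : Finset (Fin C)), {p : Outcome n C | p.1 m = v ∧ p.2 = g} := by
    ext p
    simp only [Set.mem_setOf_eq, Set.mem_iUnion]
    constructor
    · intro hp; exact ⟨p.1 m, Finset.mem_univ _, rfl, hp⟩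
    · rintro ⟨v, -, -, hp⟩; exact hp
  rw [this, measure_biUnion_finset]
  · intro v _ v' _ hvv'
    simp only [Function.onFun, Set.disjoint_left]
    rintro x ⟨h1, -⟩ ⟨h2, -⟩
    exact hvv' (h1 ▸ h2 ▸ rfl)
  · exact fun v _ => (Set.toFinite _).measurableSet

lemma pairwise_ci {n C : ℕ} (hn : 3 ≤ n) (ν : Measure (Outcome n C)) [IsProbabilityMeasure ν]
    (hci : ∀ g : Fin C, ∀ f : Fin n → Fin C,
      ν {p | p.2 = g} ^ (n - 1) * ν {p | p.1 = f ∧ p.2 = g} =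
        ∏ k, ν {p | p.1 k = f k ∧ p.2 = g})
    (i k : Fin n) (hik : i ≠ k) (c c' g : Fin C) :
    (ν {x : Outcome n C | (x.1 i = c ∧ x.1 k = c') ∧ x.2 = g}).toReal
      = (ν {p : Outcome n C | p.1 i = c ∧ p.2 = g}).toReal *
        ((ν {p : Outcome n C | p.1 k = c' ∧ p.2 = g}).toReal /
          (ν {p : Outcome n C | p.2 = g}).toReal) := by
  classical
  set h : Fin n → Fin C → ENNReal := fun m v => ν {p : Outcome n C | p.1 m = v ∧ p.2 = g} with hh
  set h' : Fin n → Fin C → ENNReal := fun m v =>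
    if m = i then (if v = c then h i c else 0)
    else if m = k then (if v = c' then h k c' else 0)
    else h m v with hh'
  set S : Finset (Fin n → Fin C) := univ.filter (fun f => f i = c ∧ f k = c') with hS
  -- step 1 : decompose over f
  have step1 : ν {x : Outcome n C | (x.1 i = c ∧ x.1 k = c') ∧ x.2 = g}
      = ∑ f ∈ S, ν {x : Outcome n C | x.1 = f ∧ x.2 = g} := by
    have : {x : Outcome n C | (x.1 i = c ∧ x.1 k = c') ∧ x.2 = g}
        = ⋃ f ∈ S, {x : Outcome n C | x.1 = f ∧ x.2 = g} := by
      ext x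
      simp only [Set.mem_setOf_eq, Set.mem_iUnion, hS, Finset.mem_filter, Finset.mem_univ,
        true_and]
      constructor
      · rintro ⟨⟨h1, h2⟩, h3⟩; exact ⟨x.1, ⟨h1, h2⟩, rfl, h3⟩
      · rintro ⟨f, ⟨h1, h2⟩, rfl, h3⟩; exact ⟨⟨h1, h2⟩, h3⟩
    rw [this, measure_biUnion_finset]
    · intro f _ f' _ hff'
      simp only [Function.onFun, Set.disjoint_left]
      rintro x ⟨h1, -⟩ ⟨h2, -⟩
      exact hff' (h1 ▸ h2 ▸ rfl)
    · exact fun f _ => (Set.toFinite _).measurableSet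
  -- step 2 : sum the hypothesis over f ∈ S
  have step2 : ν {p : Outcome n C | p.2 = g} ^ (n - 1) *
      ν {x : Outcome n C | (x.1 i = c ∧ x.1 k = c') ∧ x.2 = g}
      = ∑ f ∈ S, ∏ m, h m (f m) := by
    rw [step1, Finset.mul_sum]
    exact Finset.sum_congr rfl fun f _ => hci g f
  -- claim 1: h' products
  have claim1 : ∀ f : Fin n → Fin C,
      (∏ m, h' m (f m)) = if f i = c ∧ f k = c' then ∏ m, h m (f m) else 0 := by
    intro f
    by_cases hf : f i = c ∧ f k = c'
    · rw [if_pos hf]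
      refine Finset.prod_congr rfl fun m _ => ?_
      by_cases hmi : m = i
      · subst hmi; simp [hh', hf.1]
      · by_cases hmk : m = k
        · subst hmk; simp [hh', hmi, hf.2]
        · simp [hh', hmi, hmk]
    · rw [if_neg hf]
      rcases not_and_or.1 hf with hfi | hfk
      · refine Finset.prod_eq_zero (mem_univ i) ?_
        simp [hh', hfi]
      · refine Finset.prod_eq_zero (mem_univ k) ?_
        simp [hh', hik.symm, hfk]
  -- claim 2
  have claim2 : (∑ f ∈ S, ∏ m, h m (f m)) = ∑ f : Fin n → Fin C, ∏ m, h' m (f m) := by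
    simp_rw [claim1]
    rw [hS, Finset.sum_filter]
  -- claim 3
  have claim3 : (∑ f : Fin n → Fin C, ∏ m, h' m (f m))
      = h i c * h k c' * ν {p : Outcome n C | p.2 = g} ^ (n - 2) := by
    have := Finset.prod_univ_sum (fun _ : Fin n => (univ : Finset (Fin C))) (fun m v => h' m v)
    rw [Fintype.piFinset_univ] at this
    rw [← this]
    have hsum : ∀ m : Fin n, (∑ v : Fin C, h' m v) =
        if m = i then h i c else if m = k then h k c' else ν {p : Outcome n C | p.2 = g} := by
      intro m
      by_cases hmi : m = i
      · subst hmi; simp [hh']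
      · by_cases hmk : m = k
        · subst hmk; simp [hh', hmi]
        · simp only [hh', hmi, hmk, if_false]
          exact sum_over_coord ν m g
    rw [Finset.prod_congr rfl fun m _ => hsum m]
    rw [← Finset.mul_prod_erase univ _ (mem_univ i), if_pos rfl]
    have hk_mem : k ∈ univ.erase i := Finset.mem_erase.2 ⟨hik.symm, mem_univ k⟩
    rw [← Finset.mul_prod_erase _ _ hk_mem, if_neg hik.symm, if_pos rfl]
    have hrest : ∀ m ∈ (univ.erase i).erase k,
        (if m = i then h i c else if m = k then h k c' else ν {p : Outcome n C | p.2 = g})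
          = ν {p : Outcome n C | p.2 = g} := by
      intro m hm
      rw [Finset.mem_erase, Finset.mem_erase] at hm
      rw [if_neg hm.2.1, if_neg hm.1]
    rw [Finset.prod_congr rfl hrest, Finset.prod_const]
    have hcard : ((univ.erase i).erase k).card = n - 2 := by
      rw [Finset.card_erase_of_mem hk_mem, Finset.card_erase_of_mem (mem_univ i),
        Finset.card_univ, Fintype.card_fin]
      omega
    rw [hcard, mul_assoc]
  -- the ENNReal identity
  have key : ν {p : Outcome n C | p.2 = g} ^ (n - 1) *
      ν {x : Outcome n C | (x.1 i = c ∧ x.1 k = c') ∧ x.2 = g}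
      = h i c * h k c' * ν {p : Outcome n C | p.2 = g} ^ (n - 2) := by
    rw [step2, claim2, claim3]
  -- convert to reals
  by_cases hg : ν {p : Outcome n C | p.2 = g} = 0
  · have hz1 : ν {x : Outcome n C | (x.1 i = c ∧ x.1 k = c') ∧ x.2 = g} = 0 :=
      le_antisymm (le_trans (measure_mono (fun x hx => hx.2)) hg.le) (zero_le)
    have hz2 : ν {p : Outcome n C | p.1 i = c ∧ p.2 = g} = 0 :=
      le_antisymm (le_trans (measure_mono (fun x hx => hx.2)) hg.le) (zero_le)
    rw [hz1, hz2]
    simp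
  · have hfin : ∀ s : Set (Outcome n C), ν s ≠ ⊤ := fun s => measure_ne_top ν s
    have ha : 0 < (ν {p : Outcome n C | p.2 = g}).toReal :=
      ENNReal.toReal_pos hg (hfin _)
    have key' := congrArg ENNReal.toReal key
    rw [ENNReal.toReal_mul, ENNReal.toReal_mul, ENNReal.toReal_mul, ENNReal.toReal_pow,
      ENNReal.toReal_pow] at key'
    set a := (ν {p : Outcome n C | p.2 = g}).toReal
    set X := (ν {x : Outcome n C | (x.1 i = c ∧ x.1 k = c') ∧ x.2 = g}).toReal
    set Y := (ν {p : Outcome n C | p.1 i = c ∧ p.2 = g}).toReal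
    set Z := (ν {p : Outcome n C | p.1 k = c' ∧ p.2 = g}).toReal
    have hn1 : n - 1 = (n - 2) + 1 := by omega
    rw [hn1, pow_succ] at key'
    -- key' : a ^ (n-2) * a * X = Y * Z * a ^ (n-2)
    have hXa : a * X = Y * Z := by
      have hpow : (0:ℝ) < a ^ (n - 2) := pow_pos ha _
      nlinarith [key']
    rw [← mul_div_assoc, eq_div_iff (ne_of_gt ha), mul_comm]
    exact hXa

lemma jointIK_factor {n C : ℕ} (hn : 3 ≤ n) (ν : Measure (Outcome n C)) [IsProbabilityMeasure ν]
    (hci : ∀ g : Fin C, ∀ f : Fin n → Fin C,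
      ν {p | p.2 = g} ^ (n - 1) * ν {p | p.1 = f ∧ p.2 = g} =
        ∏ k, ν {p | p.1 k = f k ∧ p.2 = g})
    (i k : Fin n) (hik : i ≠ k) :
    jointIK ν i k = jointWithG ν i * transFromG ν k := by
  ext c c'
  rw [Matrix.mul_apply]
  show (ν {x : Outcome n C | x.1 i = c ∧ x.1 k = c'}).toReal = _
  rw [sum_over_G ν (fun x => x.1 i = c ∧ x.1 k = c'), ENNReal.toReal_sum
    (fun g _ => measure_ne_top ν _)]
  refine Finset.sum_congr rfl fun g _ => ?_
  rw [pairwise_ci hn ν hci i k hik c c' g]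
  rfl

lemma countMatrix_symm {C T n : ℕ} (Tl : Finset (Fin T)) (i k : Fin n)
    (ω : Fin T → Outcome n C) :
    countMatrix Tl i k ω = (countMatrix Tl k i ω).transpose := by
  ext c c'
  simp only [countMatrix, Matrix.transpose_apply, Matrix.of_apply]
  exact Finset.sum_congr rfl fun t _ => if_congr and_comm rfl rfl

/-- quality ordering of expected payments: assume the reports of the
`n ≥ 3` agents are conditionally independent given the ground truth `G`, tasks are i.i.d.
with per-task distribution `ν`, and the DMI-Mechanism uses `T ≥ 2C` tasks split into
disjoint parts `T₁, T₂` of size `≥ C`. Then for any two agents `i ≠ j`,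
`E[pᵢ] − E[pⱼ] = (Quality(X̂ᵢ) − Quality(X̂ⱼ)) · Σ_{k≠i,j} a₁ a₂ det(U_{X̂ₖ|G})²`. -/
theorem expected_payment_quality_ordering (C T n : ℕ) (hn : 3 ≤ n) (hT : 2 * C ≤ T)
    (ν : Measure (Outcome n C)) [IsProbabilityMeasure ν]
    (hci : ∀ g : Fin C, ∀ f : Fin n → Fin C,
      ν {p | p.2 = g} ^ (n - 1) * ν {p | p.1 = f ∧ p.2 = g} =
        ∏ k, ν {p | p.1 k = f k ∧ p.2 = g})
    (T1 T2 : Finset (Fin T)) (hdisj : Disjoint T1 T2)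
    (h1 : C ≤ T1.card) (h2 : C ≤ T2.card)
    (i j : Fin n) (hij : i ≠ j) :
    (∫ ω, payment T1 T2 i ω ∂(Measure.pi fun _ : Fin T => ν)) -
      (∫ ω, payment T1 T2 j ω ∂(Measure.pi fun _ : Fin T => ν))
      = (quality ν i - quality ν j) *
        ∑ k ∈ (Finset.univ.erase i).erase j,
          ((T1.card.choose C * Nat.factorial C : ℕ) : ℝ) *
          ((T2.card.choose C * Nat.factorial C : ℕ) : ℝ) *
          (transFromG ν k).det ^ 2 := by
  classical
  have hpay : ∀ a : Fin n, (∫ ω, payment T1 T2 a ω ∂(Measure.pi fun _ : Fin T => ν))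
      = ∑ k ∈ univ.erase a,
          ∫ ω, (countMatrix T1 a k ω).det * (countMatrix T2 a k ω).det
            ∂(Measure.pi fun _ : Fin T => ν) := by
    intro a
    unfold payment
    rw [integral_finset_sum _ (fun _ _ => Integrable.of_finite)]
  have hsymm : (∫ ω, (countMatrix T1 i j ω).det * (countMatrix T2 i j ω).det
        ∂(Measure.pi fun _ : Fin T => ν))
      = ∫ ω, (countMatrix T1 j i ω).det * (countMatrix T2 j i ω).det
        ∂(Measure.pi fun _ : Fin T => ν) := by
    refine integral_congr_ae (Filter.Eventually.of_forall fun ω => ?_)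
    show (countMatrix T1 i j ω).det * (countMatrix T2 i j ω).det
      = (countMatrix T1 j i ω).det * (countMatrix T2 j i ω).det
    rw [countMatrix_symm T1 i j ω, countMatrix_symm T2 i j ω, Matrix.det_transpose,
      Matrix.det_transpose]
  have hmemj : j ∈ univ.erase i := Finset.mem_erase.2 ⟨hij.symm, mem_univ j⟩
  have hmemi : i ∈ univ.erase j := Finset.mem_erase.2 ⟨hij, mem_univ i⟩
  rw [hpay i, hpay j, ← Finset.add_sum_erase _ _ hmemj, ← Finset.add_sum_erase _ _ hmemi,
    hsymm, show ((univ.erase j).erase i) = ((univ.erase i).erase j) from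
      Finset.erase_right_comm, add_sub_add_left_eq_sub, ← Finset.sum_sub_distrib,
    Finset.mul_sum]
  refine Finset.sum_congr rfl fun k hk => ?_
  have hk' := Finset.mem_erase.1 hk
  have hk'' := Finset.mem_erase.1 hk'.2
  have hik : i ≠ k := hk''.1.symm
  have hjk : j ≠ k := hk'.1.symm
  rw [expected_det_prod ν T1 T2 hdisj i k, expected_det_prod ν T1 T2 hdisj j k,
    jointIK_factor hn ν hci i k hik, jointIK_factor hn ν hci j k hjk,
    Matrix.det_mul, Matrix.det_mul, mul_pow, mul_pow]
  have hq : ∀ a : Fin n, quality ν a = (jointWithG ν a).det ^ 2 := fun a => sq_abs _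
  have hc1 : ((T1.card.choose C * Nat.factorial C : ℕ) : ℝ)
      = (T1.card.descFactorial C : ℝ) := by
    rw [Nat.descFactorial_eq_factorial_mul_choose]; push_cast; ring
  have hc2 : ((T2.card.choose C * Nat.factorial C : ℕ) : ℝ)
      = (T2.card.descFactorial C : ℝ) := by
    rw [Nat.descFactorial_eq_factorial_mul_choose]; push_cast; ring
  rw [hc1, hc2, hq i, hq j]
  ring
end
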